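/- For the conjunction of conditional random quantities, the prevision sum rule holds: (A|H) ∨ (B|K) = A|H + B|K − (A|H) ∧ (B|K) as random quantities, and hence ℙ[(A|H) ∨ (B|K)] = P(A|H) + P(B|K) − ℙ[(A|H) ∧ (B|K)]. -/
import Mathlib


/-- Indicator (in `ℝ`) of an event. -/
noncomputable def ind {Ω : Type*} (A : Set Ω) : Ω → ℝ := A.indicator 1

/-- The indicator of the conditional event `A|H` with `x = P(A|H)`. -/
noncomputable def condRQ {Ω : Type*} (A H : Set Ω) (x : ℝ) : Ω → ℝ :=
  fun ω => ind (A ∩ H) ω + x * ind Hᶜ ω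

/-- The conjunction `(A|H) ∧ (B|K)` as a random quantity (values
`1, 0, x, y, z` on `AHBK`; `¬AH ∨ ¬BK`; `¬HBK`; `AH¬K`; `¬H¬K`). -/
noncomputable def conjRQ {Ω : Type*} (A H B K : Set Ω) (x y z : ℝ) : Ω → ℝ :=
  fun ω => ind (A ∩ H ∩ (B ∩ K)) ω + x * ind (Hᶜ ∩ B ∩ K) ω
    + y * ind (A ∩ H ∩ Kᶜ) ω + z * ind (Hᶜ ∩ Kᶜ) ω

/-- The disjunction `(A|H) ∨ (B|K)` as a random quantity (values
`1, 0, x, y, w` on `AH ∨ BK`; `¬AH¬BK`; `¬H¬BK`; `¬AH¬K`; `¬H¬K`). -/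
noncomputable def disjRQ {Ω : Type*} (A H B K : Set Ω) (x y w : ℝ) : Ω → ℝ :=
  fun ω => ind (A ∩ H ∪ B ∩ K) ω + x * ind (Hᶜ ∩ Bᶜ ∩ K) ω
    + y * ind (Aᶜ ∩ H ∩ Kᶜ) ω + w * ind (Hᶜ ∩ Kᶜ) ω

/-- Prevision sum rule: with `w = x + y − z`,
`(A|H) ∨ (B|K) = A|H + B|K − (A|H) ∧ (B|K)` as random quantities; hence for
any linear prevision functional `ℙ`,
`ℙ[(A|H) ∨ (B|K)] = P(A|H) + P(B|K) − ℙ[(A|H) ∧ (B|K)]`. -/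
theorem prevision_sum_rule {Ω : Type*} (A H B K : Set Ω) (x y z : ℝ) :
    (∀ ω : Ω, disjRQ A H B K x y (x + y - z) ω
        = condRQ A H x ω + condRQ B K y ω - conjRQ A H B K x y z ω) ∧
    (∀ 𝔼 : (Ω → ℝ) →ₗ[ℝ] ℝ, 𝔼 (disjRQ A H B K x y (x + y - z))
        = 𝔼 (condRQ A H x) + 𝔼 (condRQ B K y) - 𝔼 (conjRQ A H B K x y z)) := by
  have h1 : ∀ ω : Ω, disjRQ A H B K x y (x + y - z) ω
      = condRQ A H x ω + condRQ B K y ω - conjRQ A H B K x y z ω := by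
    intro ω
    classical
    simp only [disjRQ, condRQ, conjRQ, ind, Set.indicator, Set.mem_inter_iff,
      Set.mem_union, Set.mem_compl_iff, Pi.one_apply]
    by_cases hA : ω ∈ A <;> by_cases hH : ω ∈ H <;>
      by_cases hB : ω ∈ B <;> by_cases hK : ω ∈ K <;>
      simp [hA, hH, hB, hK] <;> ring
  refine ⟨h1, fun E => ?_⟩
  have : disjRQ A H B K x y (x + y - z)
      = condRQ A H x + condRQ B K y - conjRQ A H B K x y z := funext h1
  rw [this, map_sub, map_add]
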